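/- For a 4×4 matrix g, with b_i(t) = Σ_{j=0}^3 g_{i,j+1}t^j/j! and Δ_{ijk} the 3×3 minor on rows 1,2,3 and columns i,j,k, the third Wronskian W(b_1,b_2,b_3) equals Δ_{123} + Δ_{124}t + Δ_{134}t²/2 + Δ_{234}t³/6. -/

import Mathlib

open Polynomial

/-- for a `4 × 4` matrix `g` over a commutative `ℚ`-algebra, with
`b i (t) = ∑_{j=0}^3 g_{i,j+1} t^j/j!` and `Δ_{ijk}` the `3 × 3` minor on rows
`1,2,3` and columns `i,j,k`, the third Wronskian satisfies
`W(b_1,b_2,b_3) = Δ₁₂₃ + Δ₁₂₄ t + Δ₁₃₄ t²/2 + Δ₂₃₄ t³/6`. -/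
theorem wronskian_three_rows_gl4
    (k : Type*) [CommRing k] [Algebra ℚ k]
    (g : Matrix (Fin 4) (Fin 4) k)
    (b : Fin 4 → Polynomial k)
    (hb : ∀ i, b i = C (g i 0) + C (g i 1) * X
        + C (g i 2 * algebraMap ℚ k (1 / 2)) * X ^ 2
        + C (g i 3 * algebraMap ℚ k (1 / 6)) * X ^ 3)
    (Δ : Fin 4 → Fin 4 → Fin 4 → k)
    (hΔ : ∀ c₁ c₂ c₃, Δ c₁ c₂ c₃ =
        Matrix.det (fun p q : Fin 3 => g (Fin.castSucc p) (![c₁, c₂, c₃] q))) :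
    Matrix.det (fun p q : Fin 3 =>
        (Polynomial.derivative (R := k))^[(q : ℕ)] (b (Fin.castSucc p)))
      = C (Δ 0 1 2) + C (Δ 0 1 3) * X
        + C (Δ 0 2 3 * algebraMap ℚ k (1 / 2)) * X ^ 2
        + C (Δ 1 2 3 * algebraMap ℚ k (1 / 6)) * X ^ 3 := by
  set a := algebraMap ℚ k (1/2) with ha
  set c := algebraMap ℚ k (1/6) with hc
  have h2 : a * 2 = 1 := by
    rw [ha, ← map_ofNat (algebraMap ℚ k) 2, ← map_mul]; norm_num
  have h3 : c * 3 = a := by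
    rw [ha, hc, ← map_ofNat (algebraMap ℚ k) 3, ← map_mul]; norm_num
  have h2' : (C a : Polynomial k) * 2 = 1 := by
    rw [← C_1, ← h2, C_mul, map_ofNat]
  have h3' : (C c : Polynomial k) * 3 = C a := by
    rw [← h3, C_mul, map_ofNat]
  have hd1 : ∀ i, derivative (b i)
      = C (g i 1) + C (g i 2) * X + C (g i 3) * C a * X ^ 2 := by
    intro i
    rw [hb]
    simp only [derivative_add, derivative_mul, derivative_C, derivative_X,
      derivative_X_pow, C_mul, map_ofNat, Nat.cast_ofNat, C_eq_natCast]
    push_cast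
    linear_combination (C (g i 2) * X) * h2' + (C (g i 3) * X ^ 2) * h3'
  have hd2 : ∀ i, derivative (derivative (b i))
      = C (g i 2) + C (g i 3) * X := by
    intro i
    rw [hd1]
    simp only [derivative_add, derivative_mul, derivative_C, derivative_X,
      derivative_X_pow, map_ofNat, Nat.cast_ofNat, C_eq_natCast]
    push_cast
    linear_combination (C (g i 3) * X) * h2'
  have hit : ∀ (p : Fin 3) (q : Fin 3),
      (Polynomial.derivative (R := k))^[(q : ℕ)] (b (Fin.castSucc p))
        = ![b (Fin.castSucc p), derivative (b (Fin.castSucc p)),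
            derivative (derivative (b (Fin.castSucc p)))] q := by
    intro p q
    fin_cases q <;> simp
  have hcs2 : (Fin.castSucc (2 : Fin 3)) = (2 : Fin 4) := rfl
  have dt : ∀ {R : Type _} [CommRing R] (f : Fin 3 → Fin 3 → R), Matrix.det (n := Fin 3) f =
      f 0 0 * f 1 1 * f 2 2 - f 0 0 * f 1 2 * f 2 1
      - f 0 1 * f 1 0 * f 2 2 + f 0 1 * f 1 2 * f 2 0
      + f 0 2 * f 1 0 * f 2 1 - f 0 2 * f 1 1 * f 2 0 :=
    fun f => Matrix.det_fin_three (Matrix.of f)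
  simp only [hit, hΔ]
  erw [dt, dt, dt, dt, dt]
  simp only [ Matrix.cons_val_zero, Matrix.cons_val_one,
    Matrix.head_cons, Matrix.cons_val_two, Matrix.tail_cons,
    Fin.castSucc_zero, Fin.castSucc_one, hcs2]
  rw [hd2, hd2, hd2, hd1, hd1, hd1, hb, hb, hb]
  simp only [C_mul, map_add, map_sub]
  linear_combination
    (X ^ 2 * (C (g 0 3) * C (g 1 2) * C (g 2 0) - C (g 0 3) * C (g 1 0) * C (g 2 2)
      - C (g 0 2) * C (g 1 3) * C (g 2 0) + C (g 0 2) * C (g 1 0) * C (g 2 3)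
      + C (g 0 0) * C (g 1 3) * C (g 2 2) - C (g 0 0) * C (g 1 2) * C (g 2 3))
    + X ^ 3 * (C (g 0 3) * C (g 1 2) * C (g 2 1) - C (g 0 3) * C (g 1 1) * C (g 2 2)
      - C (g 0 2) * C (g 1 3) * C (g 2 1) + C (g 0 2) * C (g 1 1) * C (g 2 3)
      + C (g 0 1) * C (g 1 3) * C (g 2 2) - C (g 0 1) * C (g 1 2) * C (g 2 3))) * h2'
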